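/- arXiv:1410.0785 — 5 statements merged into one kernel-verified Lean document; each statement's English description precedes it below -/
import Mathlib

section
/- Suppose a BVP fundamental solution Φ exists for A(t), B₀, B₁ on [0,1], and let G(t,s) = Φ(t)B₀Φ(0)Φ(s)⁻¹ for s ≤ t and G(t,s) = -Φ(t)B₁Φ(1)Φ(s)⁻¹ for s > t. Then for any continuous r : [0,1] → ℝⁿ with r(0) = 0 and any w ∈ ℝⁿ, the function v(t) = Φ(t)(w - B₁ r(1)) + r(t) + ∫₀¹ G(t,s)A(s)r(s) ds satisfies v(t) - v(0) - ∫₀ᵗ A(s)v(s) ds = r(t) for all t ∈ [0,1] and B₀ v(0) + B₁ v(1) = w. -/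
open Matrix

attribute [local instance] Matrix.normedAddCommGroup Matrix.normedSpace

open MeasureTheory intervalIntegral Set

/-- `mulVec` as a continuous bilinear map. -/
noncomputable def mvCLM (n : ℕ) :
    Matrix (Fin n) (Fin n) ℝ →L[ℝ] (Fin n → ℝ) →L[ℝ] (Fin n → ℝ) :=
  LinearMap.toContinuousLinearMap
    { toFun := fun M => LinearMap.toContinuousLinearMap (Matrix.mulVecLin M)
      map_add' := fun M N => by ext v; simp [Matrix.add_mulVec]
      map_smul' := fun c M => by ext v; simp [Matrix.smul_mulVec] }

@[simp] lemma mvCLM_apply {n : ℕ} (M : Matrix (Fin n) (Fin n) ℝ) (v : Fin n → ℝ) :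
    mvCLM n M v = M *ᵥ v := rfl

lemma aux_piece {E : Type*} [NormedAddCommGroup E] {a b : ℝ} (hab : a ≤ b) {f fc : ℝ → E}
    (hc : ContinuousOn fc (Set.Icc a b)) (hfc : ∀ s ∈ Set.Ioo a b, f s = fc s) :
    IntervalIntegrable f volume a b := by
  have h1 : IntervalIntegrable fc volume a b := by
    apply ContinuousOn.intervalIntegrable
    rwa [Set.uIcc_of_le hab]
  refine h1.congr_ae ?_
  have hb : ∀ᵐ x ∂volume, x ≠ b := by
    rw [ae_iff]; simpa using measure_singleton b
  rw [Set.uIoc_of_le hab]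
  filter_upwards [ae_restrict_mem measurableSet_Ioc, ae_restrict_of_ae hb] with x hx hxb
  exact (hfc x ⟨hx.1, lt_of_le_of_ne hx.2 hxb⟩).symm

lemma aux_pwInt {E : Type*} [NormedAddCommGroup E] (N : ℕ) (t : ℕ → ℝ) (f : ℝ → E)
    (ht : ∀ j < N, t j ≤ t (j+1))
    (h : ∀ j < N, ∃ fc : ℝ → E, ContinuousOn fc (Set.Icc (t j) (t (j+1))) ∧
      ∀ s ∈ Set.Ioo (t j) (t (j+1)), f s = fc s) :
    IntervalIntegrable f volume (t 0) (t N) := by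
  induction N with
  | zero => exact IntervalIntegrable.refl
  | succ N ih =>
    have h1 := ih (fun j hj => ht j (hj.trans (Nat.lt_succ_self N)))
      (fun j hj => h j (hj.trans (Nat.lt_succ_self N)))
    obtain ⟨fc, hc, hfc⟩ := h N (Nat.lt_succ_self N)
    exact h1.trans (aux_piece (ht N (Nat.lt_succ_self N)) hc hfc)

lemma aux_mv_int {n : ℕ} {f : ℝ → Fin n → ℝ} {a b : ℝ} (M : Matrix (Fin n) (Fin n) ℝ)
    (hf : IntervalIntegrable f volume a b) :
    IntervalIntegrable (fun s => M *ᵥ f s) volume a b :=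
  ⟨(mvCLM n M).integrable_comp hf.1, (mvCLM n M).integrable_comp hf.2⟩

lemma aux_mv_integral {n : ℕ} {f : ℝ → Fin n → ℝ} {a b : ℝ} (M : Matrix (Fin n) (Fin n) ℝ)
    (hf : IntervalIntegrable f volume a b) :
    ∫ s in a..b, M *ᵥ f s = M *ᵥ ∫ s in a..b, f s := by
  simpa using (mvCLM n M).intervalIntegral_comp_comm hf

lemma aux_inv_cont {n : ℕ} {Φ : ℝ → Matrix (Fin n) (Fin n) ℝ} {S : Set ℝ}
    (hc : ContinuousOn Φ S) (hu : ∀ s ∈ S, IsUnit (Φ s)) :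
    ContinuousOn (fun s => (Φ s)⁻¹) S := by
  have hdet : ContinuousOn (fun s => (Φ s).det) S :=
    (continuous_id.matrix_det).comp_continuousOn hc
  have hadj : ContinuousOn (fun s => (Φ s).adjugate) S :=
    (continuous_id.matrix_adjugate).comp_continuousOn hc
  have h0 : ∀ s ∈ S, (Φ s).det ≠ 0 := fun s hs =>
    ((Matrix.isUnit_iff_isUnit_det _).mp (hu s hs)).ne_zero
  refine ContinuousOn.congr ((hdet.inv₀ h0).smul hadj) (fun s _ => ?_)
  rw [Matrix.inv_def, Ring.inverse_eq_inv']
  rfl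

/-- `Φ` is a BVP fundamental solution for `Φ' = AΦ`, `B₀Φ(0) + B₁Φ(1) = I` on `[0,1]`,
piecewise `C¹` with respect to the mesh `t 0 < t 1 < ... < t N`. -/
def IsBVPFundSol {n : ℕ} (A : ℝ → Matrix (Fin n) (Fin n) ℝ)
    (B₀ B₁ : Matrix (Fin n) (Fin n) ℝ) (N : ℕ) (t : ℕ → ℝ)
    (Φ : ℝ → Matrix (Fin n) (Fin n) ℝ) : Prop :=
  ContinuousOn Φ (Set.Icc 0 1) ∧
  (∀ j < N, ∀ s ∈ Set.Ioo (t j) (t (j+1)), HasDerivAt Φ (A s * Φ s) s) ∧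
  B₀ * Φ 0 + B₁ * Φ 1 = 1 ∧
  (∀ s ∈ Set.Icc (0:ℝ) 1, IsUnit (Φ s))

theorem stmt_7 {n : ℕ} (A : ℝ → Matrix (Fin n) (Fin n) ℝ)
    (B₀ B₁ : Matrix (Fin n) (Fin n) ℝ) (N : ℕ) (hN : 0 < N) (t : ℕ → ℝ)
    (ht : ∀ j < N, t j < t (j+1)) (ht0 : t 0 = 0) (htN : t N = 1)
    (hA : ∀ j < N, ∃ Ac : ℝ → Matrix (Fin n) (Fin n) ℝ,
      ContinuousOn Ac (Set.Icc (t j) (t (j+1))) ∧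
      ∀ s ∈ Set.Ioo (t j) (t (j+1)), A s = Ac s)
    (Φ : ℝ → Matrix (Fin n) (Fin n) ℝ) (hΦ : IsBVPFundSol A B₀ B₁ N t Φ)
    (G : ℝ → ℝ → Matrix (Fin n) (Fin n) ℝ)
    (hG : ∀ τ s : ℝ, G τ s =
      if s ≤ τ then Φ τ * (B₀ * Φ 0) * (Φ s)⁻¹ else -(Φ τ * (B₁ * Φ 1) * (Φ s)⁻¹))
    (r : ℝ → Fin n → ℝ) (hr : ContinuousOn r (Set.Icc 0 1)) (hr0 : r 0 = 0)
    (w : Fin n → ℝ) (v : ℝ → Fin n → ℝ)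
    (hv : ∀ τ : ℝ, v τ =
      Φ τ *ᵥ (w - B₁ *ᵥ r 1) + r τ + ∫ s in (0:ℝ)..1, G τ s *ᵥ (A s *ᵥ r s)) :
    (∀ τ ∈ Set.Icc (0:ℝ) 1, v τ - v 0 - (∫ s in (0:ℝ)..τ, A s *ᵥ v s) = r τ) ∧
    B₀ *ᵥ v 0 + B₁ *ᵥ v 1 = w := by
  classical
  obtain ⟨hΦc, hΦd, hΦbc, hΦu⟩ := hΦ
  -- mesh monotonicity
  have hmt : ∀ j, j ≤ N → ∀ i, i ≤ j → t i ≤ t j := by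
    intro j
    induction j with
    | zero => intro _ i hi; obtain rfl := Nat.le_zero.mp hi; exact le_rfl
    | succ k ihk =>
      intro hk i hi
      rcases Nat.eq_or_lt_of_le hi with h | h
      · exact h ▸ le_rfl
      · exact (ihk (by omega) i (by omega)).trans (ht k (by omega)).le
  have hsub : ∀ j < N, Set.Icc (t j) (t (j+1)) ⊆ Set.Icc (0:ℝ) 1 := by
    intro j hj
    apply Set.Icc_subset_Icc
    · rw [← ht0]; exact hmt j (by omega) 0 (Nat.zero_le _)
    · rw [← htN]; exact hmt N le_rfl (j+1) (by omega)
  have hIoosub : ∀ j < N, Set.Ioo (t j) (t (j+1)) ⊆ Set.Icc (0:ℝ) 1 :=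
    fun j hj => Set.Ioo_subset_Icc_self.trans (hsub j hj)
  have huIcc01 : Set.uIcc (0:ℝ) 1 = Set.Icc 0 1 := Set.uIcc_of_le zero_le_one
  have htle : ∀ j < N, t j ≤ t (j+1) := fun j hj => (ht j hj).le
  have hΦinv : ContinuousOn (fun s => (Φ s)⁻¹) (Set.Icc 0 1) := aux_inv_cont hΦc hΦu
  set C := B₀ * Φ 0 with hCdef
  set D := B₁ * Φ 1 with hDdef
  have hCD : C + D = 1 := hΦbc
  have hone : ∀ x : Fin n → ℝ, C *ᵥ x + D *ᵥ x = x := fun x => by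
    rw [← Matrix.add_mulVec, hCD, Matrix.one_mulVec]
  have hΦmulinv : ∀ s ∈ Set.Icc (0:ℝ) 1, Φ s * (Φ s)⁻¹ = 1 := fun s hs =>
    Matrix.mul_nonsing_inv _ ((Matrix.isUnit_iff_isUnit_det _).mp (hΦu s hs))
  set ρ : ℝ → Fin n → ℝ := fun s => (Φ s)⁻¹ *ᵥ (A s *ᵥ r s) with hρdef
  -- piecewise continuity and integrability of ρ
  have hρpw : ∀ j < N, ∃ fc : ℝ → Fin n → ℝ,
      ContinuousOn fc (Set.Icc (t j) (t (j+1))) ∧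
      ∀ s ∈ Set.Ioo (t j) (t (j+1)), ρ s = fc s := by
    intro j hj
    obtain ⟨Ac, hAcc, hAce⟩ := hA j hj
    refine ⟨fun s => (Φ s)⁻¹ *ᵥ (Ac s *ᵥ r s), ?_, ?_⟩
    · exact ContinuousOn.clm_apply
        ((mvCLM n).continuous.comp_continuousOn (hΦinv.mono (hsub j hj)))
        (ContinuousOn.clm_apply
          ((mvCLM n).continuous.comp_continuousOn hAcc) (hr.mono (hsub j hj)))
    · intro s hs; rw [hρdef]; simp only; rw [hAce s hs]
  have hρ01 : IntervalIntegrable ρ volume 0 1 := by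
    have := aux_pwInt N t ρ htle hρpw; rwa [ht0, htN] at this
  have hmono : ∀ (f : ℝ → Fin n → ℝ), IntervalIntegrable f volume 0 1 →
      ∀ a ∈ Set.Icc (0:ℝ) 1, ∀ b ∈ Set.Icc (0:ℝ) 1, IntervalIntegrable f volume a b := by
    intro f hf a ha b hb
    refine hf.mono_set (Set.uIcc_subset_uIcc ?_ ?_) <;> rw [huIcc01] <;> assumption
  have h0mem : (0:ℝ) ∈ Set.Icc (0:ℝ) 1 := ⟨le_rfl, zero_le_one⟩
  have h1mem : (1:ℝ) ∈ Set.Icc (0:ℝ) 1 := ⟨zero_le_one, le_rfl⟩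
  set R : ℝ → Fin n → ℝ := fun τ => ∫ s in (0:ℝ)..τ, ρ s with hRdef
  have hR0 : R 0 = 0 := intervalIntegral.integral_same
  set K := R 1 with hKdef
  have hRc : ContinuousOn R (Set.Icc 0 1) := by
    have h := intervalIntegral.continuousOn_primitive_interval (μ := volume) (f := ρ)
      (a := (0:ℝ)) (b := 1) (by
        rw [huIcc01]
        exact (intervalIntegrable_iff_integrableOn_Icc_of_le zero_le_one).mp hρ01)
    rwa [huIcc01] at h
  set u := w - B₁ *ᵥ r 1 with hudef
  set y : ℝ → Fin n → ℝ := fun τ => u - D *ᵥ K + R τ with hydef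
  set g : ℝ → Fin n → ℝ := fun τ => Φ τ *ᵥ y τ with hgdef
  have hyc : ContinuousOn y (Set.Icc 0 1) := continuousOn_const.add hRc
  have hgc : ContinuousOn g (Set.Icc 0 1) :=
    ContinuousOn.clm_apply ((mvCLM n).continuous.comp_continuousOn hΦc) hyc
  -- the Green's function integral
  have hτint : ∀ τ ∈ Set.Icc (0:ℝ) 1,
      (∫ s in (0:ℝ)..1, G τ s *ᵥ (A s *ᵥ r s)) = Φ τ *ᵥ (R τ - D *ᵥ K) := by
    intro τ hτ
    have h0τ : IntervalIntegrable (fun s => (Φ τ * C) *ᵥ ρ s) volume 0 τ :=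
      aux_mv_int _ (hmono ρ hρ01 0 h0mem τ hτ)
    have hτ1 : IntervalIntegrable (fun s => -((Φ τ * D) *ᵥ ρ s)) volume τ 1 :=
      (aux_mv_int _ (hmono ρ hρ01 τ hτ 1 h1mem)).neg
    have hEq1 : Set.EqOn (fun s => G τ s *ᵥ (A s *ᵥ r s)) (fun s => (Φ τ * C) *ᵥ ρ s)
        (Set.uIcc 0 τ) := by
      intro s hs
      rw [Set.uIcc_of_le hτ.1] at hs
      simp only
      rw [hG τ s, if_pos hs.2, hρdef]
      simp only [Matrix.mulVec_mulVec, Matrix.mul_assoc]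
    have hEq2 : ∀ s ∈ Set.Ioc τ 1, G τ s *ᵥ (A s *ᵥ r s) = -((Φ τ * D) *ᵥ ρ s) := by
      intro s hs
      rw [hG τ s, if_neg (not_le.mpr hs.1), hρdef, Matrix.neg_mulVec]
      simp only [Matrix.mulVec_mulVec, Matrix.mul_assoc]
    have hi1 : IntervalIntegrable (fun s => G τ s *ᵥ (A s *ᵥ r s)) volume 0 τ := by
      refine h0τ.congr ?_
      intro x hx
      exact (hEq1 (Set.uIoc_subset_uIcc hx)).symm
    have hi2 : IntervalIntegrable (fun s => G τ s *ᵥ (A s *ᵥ r s)) volume τ 1 := by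
      refine hτ1.congr ?_
      intro x hx
      rw [Set.uIoc_of_le hτ.2] at hx
      exact (hEq2 x hx).symm
    rw [← intervalIntegral.integral_add_adjacent_intervals hi1 hi2]
    have e1 : (∫ s in (0:ℝ)..τ, G τ s *ᵥ (A s *ᵥ r s)) = Φ τ *ᵥ (C *ᵥ R τ) := by
      rw [intervalIntegral.integral_congr hEq1,
        aux_mv_integral _ (hmono ρ hρ01 0 h0mem τ hτ), ← Matrix.mulVec_mulVec]
    have hadj : (∫ s in τ..(1:ℝ), ρ s) = K - R τ := by
      refine eq_sub_iff_add_eq'.mpr ?_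
      exact intervalIntegral.integral_add_adjacent_intervals
        (hmono ρ hρ01 0 h0mem τ hτ) (hmono ρ hρ01 τ hτ 1 h1mem)
    have e2 : (∫ s in τ..(1:ℝ), G τ s *ᵥ (A s *ᵥ r s)) = -(Φ τ *ᵥ (D *ᵥ (K - R τ))) := by
      have hc : (∫ s in τ..(1:ℝ), G τ s *ᵥ (A s *ᵥ r s))
          = ∫ s in τ..(1:ℝ), -((Φ τ * D) *ᵥ ρ s) := by
        apply intervalIntegral.integral_congr_ae
        apply Filter.Eventually.of_forall
        intro x hx
        rw [Set.uIoc_of_le hτ.2] at hx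
        exact hEq2 x hx
      rw [hc, intervalIntegral.integral_neg, aux_mv_integral _ (hmono ρ hρ01 τ hτ 1 h1mem),
        hadj, ← Matrix.mulVec_mulVec]
    rw [e1, e2]
    have hinner : C *ᵥ R τ - D *ᵥ (K - R τ) = R τ - D *ᵥ K := by
      rw [Matrix.mulVec_sub,
        show C *ᵥ R τ - (D *ᵥ K - D *ᵥ R τ) = (C *ᵥ R τ + D *ᵥ R τ) - D *ᵥ K from by abel,
        hone]
    rw [← sub_eq_add_neg, ← Matrix.mulVec_sub, hinner]
  -- key formula
  have hkey : ∀ τ ∈ Set.Icc (0:ℝ) 1, v τ = g τ + r τ := by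
    intro τ hτ
    rw [hv τ, hτint τ hτ, hgdef]
    simp only [hydef, ← hudef]
    simp only [Matrix.mulVec_add, Matrix.mulVec_sub]
    abel
  have hvc : ContinuousOn v (Set.Icc 0 1) := (hgc.add hr).congr hkey
  -- derivative of R on open mesh intervals
  have hRd : ∀ j < N, ∀ s ∈ Set.Ioo (t j) (t (j+1)), HasDerivAt R (ρ s) s := by
    intro j hj s hs
    obtain ⟨Ac, hAcc, hAce⟩ := hA j hj
    set ρc : ℝ → Fin n → ℝ := fun x => (Φ x)⁻¹ *ᵥ (Ac x *ᵥ r x) with hρcdef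
    have hρcc : ContinuousOn ρc (Set.Icc (t j) (t (j+1))) :=
      ContinuousOn.clm_apply
        ((mvCLM n).continuous.comp_continuousOn (hΦinv.mono (hsub j hj)))
        (ContinuousOn.clm_apply
          ((mvCLM n).continuous.comp_continuousOn hAcc) (hr.mono (hsub j hj)))
    have hρeq : ∀ z ∈ Set.Ioo (t j) (t (j+1)), ρ z = ρc z := by
      intro z hz; rw [hρdef, hρcdef]; simp only; rw [hAce z hz]
    have hIccmem : Set.Icc (t j) (t (j+1)) ∈ nhds s := Icc_mem_nhds hs.1 hs.2
    have hcontAt : ContinuousAt ρc s := hρcc.continuousAt hIccmem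
    have hmeas : StronglyMeasurableAtFilter ρc (nhds s) volume :=
      ContinuousOn.stronglyMeasurableAtFilter isOpen_Ioo
        (hρcc.mono Set.Ioo_subset_Icc_self) s hs
    have hD1 : HasDerivAt (fun x => ∫ z in s..x, ρc z) (ρc s) s :=
      intervalIntegral.integral_hasDerivAt_right IntervalIntegrable.refl hmeas hcontAt
    have hD2 : HasDerivAt (fun x => R s + ∫ z in s..x, ρc z) (ρc s) s := hD1.const_add _
    have hsmem := hIoosub j hj hs
    have hev : R =ᶠ[nhds s] fun x => R s + ∫ z in s..x, ρc z := by
      filter_upwards [isOpen_Ioo.mem_nhds hs] with x hx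
      have hxmem := hIoosub j hj hx
      have h1 : (∫ z in s..x, ρ z) = ∫ z in s..x, ρc z :=
        intervalIntegral.integral_congr (fun z hz =>
          hρeq z (Set.ordConnected_Ioo.uIcc_subset hs hx hz))
      have h2 : R s + (∫ z in s..x, ρ z) = R x :=
        intervalIntegral.integral_add_adjacent_intervals
          (hmono ρ hρ01 0 h0mem s hsmem) (hmono ρ hρ01 s hsmem x hxmem)
      rw [← h1, ← h2]
    have hfin := hD2.congr_of_eventuallyEq hev
    rwa [hρeq s hs]
  -- derivative of g on open mesh intervals
  have hgd : ∀ j < N, ∀ s ∈ Set.Ioo (t j) (t (j+1)), HasDerivAt g (A s *ᵥ v s) s := by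
    intro j hj s hs
    have hsmem := hIoosub j hj hs
    have h1 : HasDerivAt (fun τ => mvCLM n (Φ τ)) (mvCLM n (A s * Φ s)) s :=
      (mvCLM n).hasFDerivAt.comp_hasDerivAt s (hΦd j hj s hs)
    have h2 : HasDerivAt y (ρ s) s := (hRd j hj s hs).const_add _
    have h3 := h1.clm_apply h2
    have h4 : mvCLM n (A s * Φ s) (y s) + mvCLM n (Φ s) (ρ s) = A s *ᵥ v s := by
      simp only [mvCLM_apply]
      rw [hkey s hsmem, hgdef]
      simp only [Matrix.mulVec_add]
      congr 1
      · rw [Matrix.mulVec_mulVec]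
      · rw [hρdef]; simp only
        rw [Matrix.mulVec_mulVec, hΦmulinv s hsmem, Matrix.one_mulVec]
    rw [h4] at h3
    exact h3
  -- integrability of A *ᵥ v
  have hAv01 : IntervalIntegrable (fun s => A s *ᵥ v s) volume 0 1 := by
    have := aux_pwInt N t (fun s => A s *ᵥ v s) htle (by
      intro j hj
      obtain ⟨Ac, hAcc, hAce⟩ := hA j hj
      exact ⟨fun s => Ac s *ᵥ v s,
        ContinuousOn.clm_apply ((mvCLM n).continuous.comp_continuousOn hAcc)
          (hvc.mono (hsub j hj)),
        fun s hs => by show A s *ᵥ v s = Ac s *ᵥ v s; rw [hAce s hs]⟩)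
    rwa [ht0, htN] at this
  -- FTC
  have hftc : ∀ τ ∈ Set.Icc (0:ℝ) 1, (∫ s in (0:ℝ)..τ, A s *ᵥ v s) = g τ - g 0 := by
    intro τ hτ
    refine MeasureTheory.integral_eq_of_hasDerivAt_off_countable_of_le g
      (fun s => A s *ᵥ v s) hτ.1 (Set.countable_range t)
      (hgc.mono (Set.Icc_subset_Icc le_rfl hτ.2)) ?_
      (hmono _ hAv01 0 h0mem τ hτ)
    rintro x ⟨hx1, hx2⟩
    have hP : ∃ j, x ≤ t j := ⟨N, by rw [htN]; exact (hx1.2.trans_le hτ.2).le⟩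
    have hj0 : Nat.find hP ≠ 0 := by
      intro h
      have := Nat.find_spec hP
      rw [h, ht0] at this
      exact absurd this (not_le.mpr hx1.1)
    obtain ⟨k, hk⟩ := Nat.exists_eq_succ_of_ne_zero hj0
    have hkx : t k < x := not_le.mp (Nat.find_min hP (by omega))
    have hjN : Nat.find hP ≤ N := Nat.find_min' hP (by rw [htN]; exact (hx1.2.trans_le hτ.2).le)
    have hkN : k < N := by omega
    have hxk1 : x < t (k+1) := by
      have hxle : x ≤ t (k+1) := by
        have hsp := Nat.find_spec hP
        rw [hk] at hsp
        exact hsp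
      rcases lt_or_eq_of_le hxle with h | h
      · exact h
      · exact absurd ⟨k+1, h.symm⟩ hx2
    exact hgd k hkN x ⟨hkx, hxk1⟩
  constructor
  · intro τ hτ
    rw [hftc τ hτ, hkey τ hτ, hkey 0 h0mem, hr0]
    abel
  · have h0 : v 0 = Φ 0 *ᵥ (u - D *ᵥ K) := by
      rw [hkey 0 h0mem, hr0, add_zero, hgdef]
      simp only [hydef]
      rw [hR0, add_zero]
    have h1 : v 1 = Φ 1 *ᵥ (u - D *ᵥ K + K) + r 1 := by
      rw [hkey 1 h1mem, hgdef]
    rw [h0, h1, Matrix.mulVec_add B₁, Matrix.mulVec_mulVec, Matrix.mulVec_mulVec,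
      ← hCdef, ← hDdef,
      show D *ᵥ (u - D *ᵥ K + K) = D *ᵥ (u - D *ᵥ K) + D *ᵥ K from Matrix.mulVec_add _ _ _,
      show C *ᵥ (u - D *ᵥ K) + (D *ᵥ (u - D *ᵥ K) + D *ᵥ K + B₁ *ᵥ r 1) =
        (C *ᵥ (u - D *ᵥ K) + D *ᵥ (u - D *ᵥ K)) + D *ᵥ K + B₁ *ᵥ r 1 from by abel,
      hone, hudef]
    abel
end

section
/- Let A : [0,1] → ℝ^{n×n} be continuous, B₀, B₁ ∈ ℝ^{n×n}, let Y(t) be the IVP fundamental solution (Y' = AY, Y(0) = I), and set R = B₀ + B₁Y(1). If R is nonsingular, then for any continuous r with r(0) = 0 and any w ∈ ℝⁿ, the function v(t) = Y(t)[R⁻¹B₀∫₀ᵗ Y(s)⁻¹A(s)r(s)ds + (R⁻¹B₀ - I)∫ₜ¹ Y(s)⁻¹A(s)r(s)ds - R⁻¹(B₁r(1) - w)] + r(t) satisfies v(t) = v(0) + ∫₀ᵗ A(s)v(s)ds + r(t) and B₀v(0) + B₁v(1) = w. -/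
open Matrix

attribute [local instance] Matrix.normedAddCommGroup Matrix.normedSpace

noncomputable def mulVecCLM (n : ℕ) :
    Matrix (Fin n) (Fin n) ℝ →L[ℝ] ((Fin n → ℝ) →L[ℝ] (Fin n → ℝ)) :=
  LinearMap.toContinuousLinearMap
    { toFun := fun M => LinearMap.toContinuousLinearMap (Matrix.mulVecLin M)
      map_add' := fun M N => by ext v; simp [Matrix.add_mulVec]
      map_smul' := fun c M => by ext v; simp [Matrix.smul_mulVec] }

@[simp] lemma mulVecCLM_apply {n : ℕ} (M : Matrix (Fin n) (Fin n) ℝ) (x : Fin n → ℝ) :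
    mulVecCLM n M x = M *ᵥ x := rfl

theorem stmt_12 {n : ℕ} (A : ℝ → Matrix (Fin n) (Fin n) ℝ) (hA : Continuous A)
    (B₀ B₁ : Matrix (Fin n) (Fin n) ℝ)
    (Y : ℝ → Matrix (Fin n) (Fin n) ℝ)
    (hY : ∀ τ : ℝ, HasDerivAt Y (A τ * Y τ) τ) (hY0 : Y 0 = 1)
    (hYinv : ∀ τ : ℝ, IsUnit (Y τ).det)
    (R : Matrix (Fin n) (Fin n) ℝ) (hR : R = B₀ + B₁ * Y 1) (hRinv : IsUnit R.det)
    (r : ℝ → Fin n → ℝ) (hr : Continuous r) (hr0 : r 0 = 0)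
    (w : Fin n → ℝ) (v : ℝ → Fin n → ℝ)
    (hv : ∀ τ : ℝ, v τ =
      Y τ *ᵥ ((R⁻¹ * B₀) *ᵥ (∫ s in (0:ℝ)..τ, (Y s)⁻¹ *ᵥ (A s *ᵥ r s))
        + (R⁻¹ * B₀ - 1) *ᵥ (∫ s in τ..(1:ℝ), (Y s)⁻¹ *ᵥ (A s *ᵥ r s))
        - R⁻¹ *ᵥ (B₁ *ᵥ r 1 - w)) + r τ) :
    (∀ τ ∈ Set.Icc (0:ℝ) 1, v τ = v 0 + (∫ s in (0:ℝ)..τ, A s *ᵥ v s) + r τ) ∧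
    B₀ *ᵥ v 0 + B₁ *ᵥ v 1 = w := by
  have hYc : Continuous Y := continuous_iff_continuousAt.2 fun τ => (hY τ).continuousAt
  set f : ℝ → Fin n → ℝ := fun s => (Y s)⁻¹ *ᵥ (A s *ᵥ r s) with hfdef
  have hYinvc : Continuous fun s => (Y s)⁻¹ := by
    rw [continuous_iff_continuousAt]
    intro s
    exact (continuousAt_matrix_inv _ (by
      simpa using NormedRing.inverse_continuousAt (hYinv s).unit)).comp hYc.continuousAt
  have hfc : Continuous f := hYinvc.matrix_mulVec (hA.matrix_mulVec hr)
  set I₁ : Fin n → ℝ := ∫ s in (0:ℝ)..1, f s with hI₁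
  set q : Fin n → ℝ := B₁ *ᵥ r 1 - w with hq
  set c : Fin n → ℝ := (R⁻¹ * B₀ - 1) *ᵥ I₁ - R⁻¹ *ᵥ q with hc
  have hv' : ∀ τ : ℝ, v τ = Y τ *ᵥ ((∫ s in (0:ℝ)..τ, f s) + c) + r τ := by
    intro τ
    rw [hv τ]
    congr 2
    have hsplit : (∫ s in τ..(1:ℝ), f s) = I₁ - ∫ s in (0:ℝ)..τ, f s := by
      rw [hI₁, eq_sub_iff_add_eq, add_comm]
      exact intervalIntegral.integral_add_adjacent_intervals
        (hfc.intervalIntegrable _ _) (hfc.intervalIntegrable _ _)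
    rw [hsplit, hc]
    simp only [Matrix.sub_mulVec, Matrix.mulVec_sub, Matrix.mulVec_add, Matrix.one_mulVec]
    abel
  set u : ℝ → Fin n → ℝ := fun τ => Y τ *ᵥ ((∫ s in (0:ℝ)..τ, f s) + c) with hu
  have hu0 : u 0 = c := by
    rw [hu]
    simp only [intervalIntegral.integral_same, hY0, Matrix.one_mulVec, zero_add]
  have hv0 : v 0 = c := by
    rw [hv' 0, hr0, hY0, intervalIntegral.integral_same, Matrix.one_mulVec, zero_add, add_zero]
  have hud : ∀ τ : ℝ, HasDerivAt u (A τ *ᵥ v τ) τ := by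
    intro τ
    have h1 : HasDerivAt (fun t => mulVecCLM n (Y t)) (mulVecCLM n (A τ * Y τ)) τ :=
      ((mulVecCLM n).hasFDerivAt).comp_hasDerivAt τ (hY τ)
    have h2 : HasDerivAt (fun t => (∫ s in (0:ℝ)..t, f s) + c) (f τ) τ := by
      have h := (intervalIntegral.integral_hasDerivAt_right
        (hfc.intervalIntegrable 0 τ)
        (hfc.stronglyMeasurableAtFilter _ _)
        hfc.continuousAt)
      simpa using h.add_const c
    have h3 := h1.clm_apply h2
    have heq : (fun t => mulVecCLM n (Y t) ((∫ s in (0:ℝ)..t, f s) + c)) = u := rfl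
    rw [heq] at h3
    refine h3.congr_deriv (Eq.symm ?_)
    rw [mulVecCLM_apply, mulVecCLM_apply, hv' τ, Matrix.mulVec_add (A τ)]
    congr 1
    · exact Matrix.mulVec_mulVec _ _ _
    · rw [hfdef]
      show A τ *ᵥ r τ = Y τ *ᵥ ((Y τ)⁻¹ *ᵥ (A τ *ᵥ r τ))
      rw [Matrix.mulVec_mulVec, Matrix.mul_nonsing_inv _ (hYinv τ), Matrix.one_mulVec]
  have huc : Continuous u := continuous_iff_continuousAt.2 fun τ => (hud τ).continuousAt
  have hvcont : Continuous v := by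
    have hvu : v = fun τ => u τ + r τ := funext hv'
    rw [hvu]; exact huc.add hr
  have key : ∀ τ : ℝ, (∫ s in (0:ℝ)..τ, A s *ᵥ v s) = u τ - u 0 := fun τ =>
    intervalIntegral.integral_eq_sub_of_hasDerivAt (fun x _ => hud x)
      ((hA.matrix_mulVec hvcont).intervalIntegrable _ _)
  constructor
  · intro τ _
    rw [hv' τ, hv' 0, key τ, hr0]
    show u τ + r τ = u 0 + 0 + (u τ - u 0) + r τ
    abel
  · have hRR : R * R⁻¹ = 1 := Matrix.mul_nonsing_inv _ hRinv
    have h1 : R * (R⁻¹ * B₀) = B₀ := by rw [← Matrix.mul_assoc, hRR, Matrix.one_mul]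
    have hv1 : v 1 = Y 1 *ᵥ (I₁ + c) + r 1 := hv' 1
    rw [hv0, hv1, Matrix.mulVec_add B₁, Matrix.mulVec_mulVec, Matrix.mulVec_add (B₁ * Y 1)]
    have e1 : B₀ *ᵥ c + (B₁ * Y 1) *ᵥ c = R *ᵥ c := by rw [← Matrix.add_mulVec, ← hR]
    have e2 : R *ᵥ c = -((B₁ * Y 1) *ᵥ I₁) - q := by
      rw [hc, Matrix.mulVec_sub, Matrix.mulVec_mulVec, Matrix.mulVec_mulVec,
        Matrix.mul_sub, h1, Matrix.mul_one, hRR, Matrix.one_mulVec, Matrix.sub_mulVec,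
        hR, Matrix.add_mulVec]
      abel
    have e3 : B₀ *ᵥ c + (B₁ * Y 1) *ᵥ c = -((B₁ * Y 1) *ᵥ I₁) - q := e1.trans e2
    have hq' : B₁ *ᵥ r 1 = q + w := by rw [hq]; abel
    rw [hq']
    linear_combination e3
end

section
/- Let A : [0,1] → ℝ^{n×n} be C^m on an interval [t_{j-1}, t_j] with Taylor expansion A(t) = Σ_{k=0}^{m-1} A_k (t - c)^k + r_m(t)(t-c)^m about the midpoint c. Define the matrix polynomial I + E(t) = Σ_{k=0}^m E^k (t-c)^k by E^0 = I and E^k = (1/k) Σ_{l=0}^{k-1} A_l E^{k-l-1}. Then A(t)(I + E(t)) - E'(t) is a polynomial (plus remainder) all of whose terms have degree at least m in (t-c); i.e., using the truncated expansion with A_m := r_m(t), A(t)(I+E(t)) - E'(t) = Σ_{k=m}^{2m} (t-c)^k Σ_{l=0}^{m} A_l E^{k-l} where E^k := 0 for k > m. -/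
open Matrix Finset

theorem stmt_17 {n m : ℕ} (hm : 1 ≤ m) (c : ℝ)
    (A : ℝ → Matrix (Fin n) (Fin n) ℝ)
    (Acoef : ℕ → Matrix (Fin n) (Fin n) ℝ) (rm : ℝ → Matrix (Fin n) (Fin n) ℝ)
    (hA : ∀ t : ℝ, A t = (∑ k ∈ Finset.range m, (t - c) ^ k • Acoef k)
      + (t - c) ^ m • rm t)
    (E : ℕ → Matrix (Fin n) (Fin n) ℝ) (hE0 : E 0 = 1)
    (hErec : ∀ k, 1 ≤ k → k ≤ m →
      E k = ((k : ℝ)⁻¹) • ∑ l ∈ Finset.range k, Acoef l * E (k - l - 1))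
    (hEzero : ∀ k, m < k → E k = 0) :
    ∀ t : ℝ,
      A t * (∑ k ∈ Finset.range (m + 1), (t - c) ^ k • E k)
        - (∑ k ∈ Finset.range m, (((k : ℝ) + 1) * (t - c) ^ k) • E (k + 1))
      = ∑ k ∈ Finset.Icc m (2 * m), (t - c) ^ k •
          ∑ l ∈ Finset.range (m + 1), (if l = m then rm t else Acoef l) * E (k - l) := by
  intro t
  set x := t - c with hx
  set B : ℕ → Matrix (Fin n) (Fin n) ℝ := fun l => if l = m then rm t else Acoef l with hB
  have hBif : ∀ l, (if l = m then rm t else Acoef l) = B l := fun _ => rfl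
  have hBlt : ∀ l, l < m → B l = Acoef l := fun l hl => if_neg (Nat.ne_of_lt hl)
  have hBm : B m = rm t := if_pos rfl
  have hAt : A t = ∑ l ∈ Finset.range (m + 1), x ^ l • B l := by
    rw [hA t, Finset.sum_range_succ, hBm]
    congr 1
    exact Finset.sum_congr rfl fun l hl => by rw [hBlt l (Finset.mem_range.mp hl)]
  have key : ∀ l ∈ Finset.range (m + 1),
      ∑ k ∈ Finset.range (m + 1), x ^ (l + k) • (B l * E k)
      = ∑ j ∈ Finset.Ico l (2 * m + 1), x ^ j • (B l * E (j - l)) := by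
    intro l hl
    have hlm : l ≤ m := Nat.lt_succ_iff.mp (Finset.mem_range.mp hl)
    rw [Finset.sum_Ico_eq_sum_range]
    have h1 : ∀ i, x ^ (l + i) • (B l * E (l + i - l)) = x ^ (l + i) • (B l * E i) := by
      intro i; rw [Nat.add_sub_cancel_left]
    simp only [h1]
    apply Finset.sum_subset
    · intro i hi
      simp only [Finset.mem_range] at hi ⊢
      omega
    · intro i hi1 hi2
      simp only [Finset.mem_range] at hi1 hi2
      rw [hEzero i (by omega), mul_zero, smul_zero]
  rw [sub_eq_iff_eq_add, hAt, Finset.sum_mul_sum]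
  have hprod : ∀ l k : ℕ, (x ^ l • B l) * (x ^ k • E k) = x ^ (l + k) • (B l * E k) := by
    intro l k
    rw [smul_mul_assoc, mul_smul_comm, smul_smul, ← pow_add]
  simp only [hprod, hBif, Finset.smul_sum]
  rw [Finset.sum_comm (s := Finset.Icc m (2 * m))]
  have hD : ∑ k ∈ Finset.range m, (((k : ℝ) + 1) * x ^ k) • E (k + 1)
      = ∑ l ∈ Finset.range (m + 1), ∑ k ∈ Finset.Ico l m, x ^ k • (B l * E (k - l)) := by
    have step1 : ∀ k ∈ Finset.range m,
        (((k : ℝ) + 1) * x ^ k) • E (k + 1)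
          = ∑ l ∈ Finset.range (k + 1), x ^ k • (B l * E (k - l)) := by
      intro k hk
      have hkm := Finset.mem_range.mp hk
      rw [hErec (k + 1) (by omega) (by omega), smul_smul]
      have hne : ((k : ℝ) + 1) ≠ 0 := by positivity
      have hc : (((k : ℝ) + 1) * x ^ k) * (((k + 1 : ℕ) : ℝ))⁻¹ = x ^ k := by
        push_cast
        field_simp
      rw [hc, Finset.smul_sum]
      refine Finset.sum_congr rfl fun l hl => ?_
      have hlk := Finset.mem_range.mp hl
      rw [hBlt l (by omega), show k + 1 - l - 1 = k - l from by omega]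
    rw [Finset.sum_congr rfl step1, (funext fun a => Finset.range_eq_Ico a : (Finset.range : ℕ → Finset ℕ) = Finset.Ico 0),
      ← Finset.sum_Ico_Ico_comm (f := fun l k => x ^ k • (B l * E (k - l))),
      ← (funext fun a => Finset.range_eq_Ico a : (Finset.range : ℕ → Finset ℕ) = Finset.Ico 0), Finset.sum_range_succ, Finset.Ico_self,
      Finset.sum_empty, add_zero]
  rw [hD, ← Finset.sum_add_distrib]
  refine Finset.sum_congr rfl fun l hl => ?_
  have hlm : l ≤ m := Nat.lt_succ_iff.mp (Finset.mem_range.mp hl)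
  rw [key l hl, show Finset.Icc m (2 * m) = Finset.Ico m (2 * m + 1) from
    (Finset.Ico_add_one_right_eq_Icc m (2 * m)).symm,
    ← Finset.sum_Ico_consecutive _ hlm (show m ≤ 2 * m + 1 by omega), add_comm]
end

section
/- Let A_k ∈ ℝ^{n×n}, k = 0,...,m-1, and define recursively E^0 = I, E^k = (1/k)Σ_{l=0}^{k-1} A_l E^{k-l-1}, and F^0 = I, F^k = -(1/k)Σ_{l=0}^{k-1} F^{k-l-1} A_l for k = 1,...,m. Then the polynomial products satisfy: the coefficient of (t-c)^k in (I + F(t))(I + E(t)) vanishes for 1 ≤ k ≤ m, where E(t) = Σ_{k=1}^m E^k (t-c)^k and F(t) = Σ_{k=1}^m F^k (t-c)^k; i.e., (I+F(t))(I+E(t)) = I + (terms of degree > m). -/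
open Matrix Finset

private lemma tri_aux {M : Type*} [AddCommMonoid M] (g : ℕ → ℕ → M) :
    ∀ k, ∑ l ∈ Finset.range k, ∑ j ∈ Finset.range (l + 1), g (l - j) j
       = ∑ a ∈ Finset.range k, ∑ j ∈ Finset.range (k - a), g a j := by
  intro k
  induction k with
  | zero => simp
  | succ k ih =>
    rw [Finset.sum_range_succ, ih]
    have hL : ∑ j ∈ Finset.range (k + 1), g (k - j) j
        = ∑ j ∈ Finset.range (k + 1), g j (k - j) := by
      rw [← Finset.sum_range_reflect (fun j => g j (k - j)) (k + 1)]
      refine Finset.sum_congr rfl fun j hj => ?_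
      rw [Finset.mem_range] at hj
      congr 1 <;> omega
    rw [hL]
    rw [Finset.sum_range_succ (fun a => ∑ j ∈ Finset.range (k + 1 - a), g a j)]
    have hR : ∀ a ∈ Finset.range k, ∑ j ∈ Finset.range (k + 1 - a), g a j
        = ∑ j ∈ Finset.range (k - a), g a j + g a (k - a) := by
      intro a ha
      rw [Finset.mem_range] at ha
      have h : k + 1 - a = (k - a) + 1 := by omega
      rw [h, Finset.sum_range_succ]
    rw [Finset.sum_congr rfl hR, Finset.sum_add_distrib,
      Finset.sum_range_succ (fun j => g j (k - j))]
    simp [Nat.sub_self]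
    abel

theorem stmt_18 {n m : ℕ} (hm : 1 ≤ m)
    (Acoef : ℕ → Matrix (Fin n) (Fin n) ℝ)
    (E F : ℕ → Matrix (Fin n) (Fin n) ℝ) (hE0 : E 0 = 1) (hF0 : F 0 = 1)
    (hErec : ∀ k, 1 ≤ k → k ≤ m →
      E k = ((k : ℝ)⁻¹) • ∑ l ∈ Finset.range k, Acoef l * E (k - l - 1))
    (hFrec : ∀ k, 1 ≤ k → k ≤ m →
      F k = -(((k : ℝ)⁻¹) • ∑ l ∈ Finset.range k, F (k - l - 1) * Acoef l)) :
    ∀ k, 1 ≤ k → k ≤ m → ∑ l ∈ Finset.range (k + 1), F l * E (k - l) = 0 := by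
  intro k hk1 hkm
  have hk0 : (k : ℝ) ≠ 0 := Nat.cast_ne_zero.mpr (by omega)
  suffices h : (k : ℝ) • ∑ l ∈ Finset.range (k + 1), F l * E (k - l) = 0 by
    rcases smul_eq_zero.mp h with h | h
    · exact absurd h hk0
    · exact h
  have hF' : ∀ l, l ≤ k →
      (l : ℝ) • F l = -∑ j ∈ Finset.range l, F (l - j - 1) * Acoef j := by
    intro l hl
    rcases Nat.eq_zero_or_pos l with rfl | hl1
    · simp
    · rw [hFrec l hl1 (le_trans hl hkm), smul_neg, smul_smul,
        mul_inv_cancel₀ (Nat.cast_ne_zero.mpr (by omega)), one_smul]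
  have hE' : ∀ l, l ≤ k →
      (l : ℝ) • E l = ∑ j ∈ Finset.range l, Acoef j * E (l - j - 1) := by
    intro l hl
    rcases Nat.eq_zero_or_pos l with rfl | hl1
    · simp
    · rw [hErec l hl1 (le_trans hl hkm), smul_smul,
        mul_inv_cancel₀ (Nat.cast_ne_zero.mpr (by omega)), one_smul]
  calc (k : ℝ) • ∑ l ∈ Finset.range (k + 1), F l * E (k - l)
      = ∑ l ∈ Finset.range (k + 1),
          (((l : ℝ) • F l) * E (k - l) + F l * (((k - l : ℕ) : ℝ) • E (k - l))) := by
        rw [Finset.smul_sum]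
        refine Finset.sum_congr rfl fun l hl => ?_
        rw [Finset.mem_range] at hl
        have hc : (k : ℝ) = (l : ℝ) + ((k - l : ℕ) : ℝ) := by
          rw [Nat.cast_sub (by omega)]; ring
        rw [hc, add_smul, smul_mul_assoc, mul_smul_comm]
    _ = ∑ l ∈ Finset.range (k + 1),
          ((-∑ j ∈ Finset.range l, F (l - j - 1) * Acoef j) * E (k - l)
            + F l * ∑ j ∈ Finset.range (k - l), Acoef j * E (k - l - j - 1)) := by
        refine Finset.sum_congr rfl fun l hl => ?_
        rw [Finset.mem_range] at hl
        rw [hF' l (by omega), hE' (k - l) (by omega)]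
    _ = -(∑ l ∈ Finset.range (k + 1), ∑ j ∈ Finset.range l,
            F (l - j - 1) * Acoef j * E (k - l))
        + ∑ l ∈ Finset.range (k + 1), ∑ j ∈ Finset.range (k - l),
            F l * (Acoef j * E (k - l - j - 1)) := by
        rw [Finset.sum_add_distrib, ← Finset.sum_neg_distrib]
        congr 1
        · refine Finset.sum_congr rfl fun l _ => ?_
          rw [neg_mul, Finset.sum_mul]
        · exact Finset.sum_congr rfl fun l _ => Finset.mul_sum _ _ _
  rw [neg_add_eq_zero]
  rw [Finset.sum_range_succ' (fun l => ∑ j ∈ Finset.range l,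
        F (l - j - 1) * Acoef j * E (k - l)) k,
      Finset.sum_range_succ (fun l => ∑ j ∈ Finset.range (k - l),
        F l * (Acoef j * E (k - l - j - 1)))]
  simp only [Finset.range_zero, Finset.sum_empty, add_zero, Nat.sub_self]
  have key := tri_aux (fun a b => F a * Acoef b * E (k - 1 - a - b)) k
  calc ∑ l ∈ Finset.range k, ∑ j ∈ Finset.range (l + 1),
          F (l + 1 - j - 1) * Acoef j * E (k - (l + 1))
      = ∑ l ∈ Finset.range k, ∑ j ∈ Finset.range (l + 1),
          F (l - j) * Acoef j * E (k - 1 - (l - j) - j) := by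
        refine Finset.sum_congr rfl fun l hl => Finset.sum_congr rfl fun j hj => ?_
        rw [Finset.mem_range] at hl hj
        have h1 : l + 1 - j - 1 = l - j := by omega
        have h2 : k - (l + 1) = k - 1 - (l - j) - j := by omega
        rw [h1, h2]
    _ = ∑ a ∈ Finset.range k, ∑ j ∈ Finset.range (k - a),
          F a * Acoef j * E (k - 1 - a - j) := key
    _ = ∑ l ∈ Finset.range k, ∑ j ∈ Finset.range (k - l),
          F l * (Acoef j * E (k - l - j - 1)) := by
        refine Finset.sum_congr rfl fun l hl => Finset.sum_congr rfl fun j hj => ?_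
        rw [Finset.mem_range] at hl hj
        have h1 : k - 1 - l - j = k - l - j - 1 := by omega
        rw [mul_assoc, h1]
end

section
/- Let X, Y be Banach spaces, D ⊆ X open and convex, F : D → Y differentiable with ‖DF(x) - DF(y)‖ ≤ K‖x - y‖ on D. Let y₀ ∈ D with DF(y₀) boundedly invertible with inverse A, and suppose β ≥ ‖A‖, η ≥ ‖A F(y₀)‖, and h := βKη ≤ 1/2. Set s₀ = (1 - √(1-2h))/(βK) and assume the closed ball S of radius s₀ about y₀ is contained in D. Then there exists x ∈ S with F(x) = 0, and x is the unique zero of F in D ∩ B_{s₁}(y₀) where s₁ = (1 + √(1-2h))/(βK). -/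
open Set

/-- Sharp mean value estimate: if `‖G' u‖ ≤ C‖u - y₀‖` on a convex open set,
then `‖G x - G y‖ ≤ C/2 (‖x-y₀‖+‖y-y₀‖) ‖x-y‖`. -/
lemma nk_mvt {X : Type*} [NormedAddCommGroup X] [NormedSpace ℝ X]
    {D : Set X} (hD : IsOpen D) (hconv : Convex ℝ D)
    {G : X → X} {G' : X → X →L[ℝ] X} (hG : ∀ u ∈ D, HasFDerivAt G (G' u) u)
    {C : ℝ} (hC : 0 ≤ C) {y₀ : X}
    (hbound : ∀ u ∈ D, ∀ v, ‖G' u v‖ ≤ C * ‖u - y₀‖ * ‖v‖)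
    {x y : X} (hx : x ∈ D) (hy : y ∈ D) :
    ‖G x - G y‖ ≤ C / 2 * (‖x - y₀‖ + ‖y - y₀‖) * ‖x - y‖ := by
  set a := ‖y - y₀‖ with ha
  set b := ‖x - y₀‖ with hb
  set c := ‖x - y‖ with hc
  set ξ : ℝ → X := fun s => y + s • (x - y) with hξ
  have hmem : ∀ s ∈ Icc (0:ℝ) 1, ξ s ∈ D := by
    intro s hs
    have := hconv hy hx (by linarith [hs.2] : (0:ℝ) ≤ 1 - s) hs.1 (by ring)
    convert this using 1
    simp only [hξ]
    module
  have hξd : ∀ s : ℝ, HasDerivAt ξ (x - y) s := by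
    intro s
    simpa [hξ] using ((hasDerivAt_id s).smul_const (x - y)).const_add y
  set f : ℝ → X := fun s => G (ξ s) - G y with hf
  set f' : ℝ → X := fun s => G' (ξ s) (x - y) with hf'
  have hfd : ∀ s ∈ Icc (0:ℝ) 1, HasDerivAt f (f' s) s := by
    intro s hs
    exact (((hG _ (hmem s hs)).comp_hasDerivAt s (hξd s)).sub_const (G y))
  set B : ℝ → ℝ := fun s => C * c * (a * s + (b - a) * s ^ 2 / 2) with hB
  set B' : ℝ → ℝ := fun s => C * c * (a + (b - a) * s) with hB'
  have hBd : ∀ s : ℝ, HasDerivAt B (B' s) s := by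
    intro s
    have h1 : HasDerivAt (fun s : ℝ => a * s + (b - a) * s ^ 2 / 2) (a + (b - a) * s) s := by
      have := ((hasDerivAt_id s).const_mul a).add
        (((hasDerivAt_pow 2 s).const_mul (b - a)).div_const 2)
      refine this.congr_deriv ?_
      rw [show (2:ℕ) - 1 = 1 from rfl]; push_cast; ring
    simpa [hB, hB', mul_assoc] using h1.const_mul (C * c)
  have hbound' : ∀ s ∈ Ico (0:ℝ) 1, ‖f' s‖ ≤ B' s := by
    intro s hs
    have hξn : ‖ξ s - y₀‖ ≤ a + (b - a) * s := by
      have heq : ξ s - y₀ = (1 - s) • (y - y₀) + s • (x - y₀) := by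
        simp only [hξ]; module
      rw [heq]
      calc ‖(1 - s) • (y - y₀) + s • (x - y₀)‖
          ≤ ‖(1 - s) • (y - y₀)‖ + ‖s • (x - y₀)‖ := norm_add_le _ _
        _ ≤ (1 - s) * a + s * b := by
            rw [norm_smul, norm_smul, Real.norm_eq_abs, Real.norm_eq_abs,
              abs_of_nonneg (by linarith [hs.2] : (0:ℝ) ≤ 1 - s), abs_of_nonneg hs.1]
        _ = a + (b - a) * s := by ring
    calc ‖f' s‖ ≤ C * ‖ξ s - y₀‖ * c := hbound _ (hmem s ⟨hs.1, hs.2.le⟩) _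
      _ ≤ B' s := by
          simp only [hB']
          nlinarith [mul_le_mul_of_nonneg_left hξn (mul_nonneg hC (norm_nonneg (x - y)))]
  have key := image_norm_le_of_norm_deriv_right_le_deriv_boundary
    (f := f) (f' := f') (a := 0) (b := 1)
    (fun s hs => (hfd s hs).continuousAt.continuousWithinAt)
    (fun s hs => (hfd s ⟨hs.1, hs.2.le⟩).hasDerivWithinAt)
    (by simp [hf, hξ, hB]) hBd hbound' (right_mem_Icc.2 zero_le_one)
  have hf1 : f 1 = G x - G y := by simp [hf, hξ]
  rw [hf1] at key
  calc ‖G x - G y‖ ≤ B 1 := key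
    _ = C / 2 * (b + a) * c := by simp only [hB]; ring

noncomputable def nkSeq (η c : ℝ) : ℕ → ℝ
  | 0 => 0
  | n + 1 => η + c / 2 * (nkSeq η c n) ^ 2

set_option maxHeartbeats 1000000 in
/-- Newton–Kantorovich theorem. -/
theorem stmt_19 {X Y : Type*} [NormedAddCommGroup X] [NormedSpace ℝ X] [CompleteSpace X]
    [NormedAddCommGroup Y] [NormedSpace ℝ Y] [CompleteSpace Y]
    (D : Set X) (hD : IsOpen D) (hconv : Convex ℝ D)
    (F : X → Y) (F' : X → X →L[ℝ] Y) (hF : ∀ x ∈ D, HasFDerivAt F (F' x) x)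
    (K : ℝ) (hK : 0 < K)
    (hLip : ∀ x ∈ D, ∀ y ∈ D, ‖F' x - F' y‖ ≤ K * ‖x - y‖)
    (y₀ : X) (hy₀ : y₀ ∈ D)
    (A : Y →L[ℝ] X) (hA1 : ∀ x, A ((F' y₀) x) = x) (hA2 : ∀ y, (F' y₀) (A y) = y)
    (β η : ℝ) (hβ : 0 < β) (hβA : ‖A‖ ≤ β) (hη : ‖A (F y₀)‖ ≤ η)
    (h : ℝ) (hdef : h = β * K * η) (hhalf : h ≤ 1 / 2)
    (s₀ s₁ : ℝ) (hs₀ : s₀ = (1 - Real.sqrt (1 - 2 * h)) / (β * K))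
    (hs₁ : s₁ = (1 + Real.sqrt (1 - 2 * h)) / (β * K))
    (hS : Metric.closedBall y₀ s₀ ⊆ D) :
    ∃ x ∈ Metric.closedBall y₀ s₀, F x = 0 ∧
      ∀ z ∈ D ∩ Metric.ball y₀ s₁, F z = 0 → z = x := by
  -- basic scalar facts
  have hc : (0:ℝ) < β * K := mul_pos hβ hK
  have hη0 : 0 ≤ η := le_trans (norm_nonneg _) hη
  have hh0 : 0 ≤ h := by rw [hdef]; positivity
  set r := Real.sqrt (1 - 2 * h) with hr
  have hr2 : r ^ 2 = 1 - 2 * h := Real.sq_sqrt (by linarith)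
  have hr0 : 0 ≤ r := Real.sqrt_nonneg _
  have hr1 : r ≤ 1 := by nlinarith
  have hs₀0 : 0 ≤ s₀ := by
    rw [hs₀]; apply div_nonneg (by linarith) hc.le
  -- fixed point identity for the majorant
  have hfix : η + β * K / 2 * s₀ ^ 2 = s₀ := by
    have hη' : β * K * η = h := by rw [hdef]
    rw [hs₀]
    field_simp
    nlinarith [hr2, hη']
  have hsum : β * K / 2 * (s₀ + s₁) = 1 := by
    rw [hs₀, hs₁]; field_simp; ring
  -- the simplified Newton map
  set G : X → X := fun u => u - A (F u) with hG
  set G' : X → X →L[ℝ] X := fun u => ContinuousLinearMap.id ℝ X - A.comp (F' u) with hG'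
  have hGd : ∀ u ∈ D, HasFDerivAt G (G' u) u := by
    intro u hu
    exact (hasFDerivAt_id u).sub (A.hasFDerivAt.comp u (hF u hu))
  have hGb : ∀ u ∈ D, ∀ v, ‖G' u v‖ ≤ β * K * ‖u - y₀‖ * ‖v‖ := by
    intro u hu v
    have heq : G' u v = A ((F' y₀ - F' u) v) := by
      simp [hG', ContinuousLinearMap.sub_apply, map_sub, hA1 v]
    rw [heq]
    calc ‖A ((F' y₀ - F' u) v)‖ ≤ ‖A‖ * ‖(F' y₀ - F' u) v‖ := A.le_opNorm _
      _ ≤ ‖A‖ * (‖F' y₀ - F' u‖ * ‖v‖) := by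
          gcongr; exact (F' y₀ - F' u).le_opNorm v
      _ ≤ β * (K * ‖y₀ - u‖ * ‖v‖) := by
          refine mul_le_mul hβA ?_ (by positivity) hβ.le
          exact mul_le_mul_of_nonneg_right (hLip y₀ hy₀ u hu) (norm_nonneg v)
      _ = β * K * ‖u - y₀‖ * ‖v‖ := by rw [norm_sub_rev]; ring
  have key : ∀ x ∈ D, ∀ y ∈ D,
      ‖G x - G y‖ ≤ β * K / 2 * (‖x - y₀‖ + ‖y - y₀‖) * ‖x - y‖ :=
    fun x hx y hy => nk_mvt hD hconv hGd hc.le hGb hx hy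
  -- the majorant sequence
  set t : ℕ → ℝ := nkSeq η (β * K) with ht
  have ht0 : t 0 = 0 := rfl
  have htS : ∀ n, t (n + 1) = η + β * K / 2 * (t n) ^ 2 := fun n => rfl
  have htprop : ∀ n, 0 ≤ t n ∧ t n ≤ t (n + 1) ∧ t n ≤ s₀ := by
    intro n
    induction n with
    | zero =>
      refine ⟨le_refl _, ?_, hs₀0⟩
      rw [ht0, htS 0, ht0]; nlinarith
    | succ n ih =>
      obtain ⟨h1, h2, h3⟩ := ih
      have h4 : t (n + 1) ≤ s₀ := by
        rw [htS n]
        nlinarith [mul_nonneg (mul_nonneg hc.le (sub_nonneg.2 h3))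
          (by linarith : (0:ℝ) ≤ s₀ + t n)]
      refine ⟨by linarith, ?_, h4⟩
      rw [htS n, htS (n+1)]
      nlinarith [mul_nonneg (mul_nonneg hc.le (sub_nonneg.2 h2))
        (by linarith : (0:ℝ) ≤ t (n + 1) + t n)]
  have htmono : Monotone t := monotone_nat_of_le_succ fun n => (htprop n).2.1
  have htle : ∀ n, t n ≤ s₀ := fun n => (htprop n).2.2
  -- the Newton iterates
  set xs : ℕ → X := fun n => G^[n] y₀ with hxs
  have hxsS : ∀ n, xs (n + 1) = G (xs n) := fun n => Function.iterate_succ_apply' G n y₀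
  have hxs0 : xs 0 = y₀ := rfl
  have hxsD : ∀ n, ‖xs n - y₀‖ ≤ t n → xs n ∈ D := by
    intro n hn
    exact hS (by simpa [Metric.mem_closedBall, dist_eq_norm] using hn.trans (htle n))
  have hxprop : ∀ n, ‖xs n - y₀‖ ≤ t n ∧ ‖xs (n + 1) - xs n‖ ≤ t (n + 1) - t n := by
    intro n
    induction n with
    | zero =>
      constructor
      · simp [hxs0, ht0]
      · have heq : xs 1 - xs 0 = -(A (F y₀)) := by
          rw [hxsS 0, hxs0]
          show (y₀ - A (F y₀)) - y₀ = -(A (F y₀))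
          abel
        have ht1 : t 1 = η := by rw [htS 0, ht0]; ring
        show ‖xs 1 - xs 0‖ ≤ t 1 - t 0
        rw [heq, norm_neg, ht1, ht0, sub_zero]
        exact hη
    | succ n ih =>
      obtain ⟨h1, h2⟩ := ih
      have h3 : ‖xs (n + 1) - y₀‖ ≤ t (n + 1) := by
        calc ‖xs (n + 1) - y₀‖ = ‖(xs (n + 1) - xs n) + (xs n - y₀)‖ := by
              rw [sub_add_sub_cancel]
          _ ≤ ‖xs (n + 1) - xs n‖ + ‖xs n - y₀‖ := norm_add_le _ _
          _ ≤ (t (n + 1) - t n) + t n := add_le_add h2 h1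
          _ = t (n + 1) := by ring
      refine ⟨h3, ?_⟩
      have hd1 : xs n ∈ D := hxsD n h1
      have hd2 : xs (n + 1) ∈ D := hxsD (n + 1) h3
      calc ‖xs (n + 2) - xs (n + 1)‖ = ‖G (xs (n + 1)) - G (xs n)‖ := by
            rw [hxsS (n + 1), hxsS n]
        _ ≤ β * K / 2 * (‖xs (n + 1) - y₀‖ + ‖xs n - y₀‖) * ‖xs (n + 1) - xs n‖ :=
            key _ hd2 _ hd1
        _ ≤ β * K / 2 * (t (n + 1) + t n) * (t (n + 1) - t n) := by
            have e0 := (htprop n).1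
            have e1 := (htprop n).2.1
            have e2 : β * K / 2 * (‖xs (n + 1) - y₀‖ + ‖xs n - y₀‖)
                ≤ β * K / 2 * (t (n + 1) + t n) :=
              mul_le_mul_of_nonneg_left (add_le_add h3 h1) (by positivity)
            exact mul_le_mul e2 h2 (norm_nonneg _)
              (mul_nonneg (by positivity) (by linarith))
        _ = t (n + 2) - t (n + 1) := by rw [htS (n+1), htS n]; ring
  -- telescoping
  have htel : ∀ n m, ‖xs (n + m) - xs n‖ ≤ t (n + m) - t n := by
    intro n m
    induction m with
    | zero => simp
    | succ m ih =>
      show ‖xs (n + m + 1) - xs n‖ ≤ t (n + m + 1) - t n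
      calc ‖xs (n + m + 1) - xs n‖
          = ‖(xs (n + m + 1) - xs (n + m)) + (xs (n + m) - xs n)‖ := by
            rw [sub_add_sub_cancel]
        _ ≤ ‖xs (n + m + 1) - xs (n + m)‖ + ‖xs (n + m) - xs n‖ := norm_add_le _ _
        _ ≤ (t (n + m + 1) - t (n + m)) + (t (n + m) - t n) :=
            add_le_add (hxprop (n + m)).2 ih
        _ = t (n + m + 1) - t n := by ring
  -- t converges, hence xs is Cauchy
  have htconv : ∃ L, Filter.Tendsto t Filter.atTop (nhds L) :=
    ⟨_, tendsto_atTop_ciSup htmono ⟨s₀, by rintro y ⟨n, rfl⟩; exact htle n⟩⟩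
  obtain ⟨L, htL⟩ := htconv
  have htC : CauchySeq t := htL.cauchySeq
  have hxC : CauchySeq xs := by
    rw [Metric.cauchySeq_iff'] at htC ⊢
    intro ε hε
    obtain ⟨N, hN⟩ := htC ε hε
    refine ⟨N, fun n hn => ?_⟩
    obtain ⟨m, rfl⟩ := Nat.exists_eq_add_of_le hn
    calc dist (xs (N + m)) (xs N) = ‖xs (N + m) - xs N‖ := dist_eq_norm _ _
      _ ≤ t (N + m) - t N := htel N m
      _ ≤ |t (N + m) - t N| := le_abs_self _
      _ = dist (t (N + m)) (t N) := (Real.dist_eq _ _).symm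
      _ < ε := hN (N + m) (Nat.le_add_right N m)
  obtain ⟨x, hxlim⟩ := cauchySeq_tendsto_of_complete hxC
  have hxball : x ∈ Metric.closedBall y₀ s₀ := by
    refine Metric.isClosed_closedBall.mem_of_tendsto hxlim (Filter.Eventually.of_forall fun n => ?_)
    simpa [Metric.mem_closedBall, dist_eq_norm] using ((hxprop n).1).trans (htle n)
  have hxD : x ∈ D := hS hxball
  -- x is a fixed point of G
  have hGx : G x = x := by
    have hcont : Filter.Tendsto (fun n => G (xs n)) Filter.atTop (nhds (G x)) :=
      ((hGd x hxD).continuousAt.tendsto).comp hxlim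
    have hshift : Filter.Tendsto (fun n => xs (n + 1)) Filter.atTop (nhds x) :=
      hxlim.comp (Filter.tendsto_add_atTop_nat 1)
    have : Filter.Tendsto (fun n => xs (n + 1)) Filter.atTop (nhds (G x)) := by
      simpa [hxsS] using hcont
    exact tendsto_nhds_unique this hshift
  have hFx : F x = 0 := by
    have hAFx : A (F x) = 0 := by
      have h5 : x - A (F x) = x := hGx
      rwa [sub_eq_self] at h5
    calc F x = F' y₀ (A (F x)) := (hA2 (F x)).symm
      _ = 0 := by rw [hAFx]; exact map_zero _
  -- uniqueness
  refine ⟨x, hxball, hFx, ?_⟩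
  rintro z ⟨hzD, hzB⟩ hFz
  have hGz : G z = z := by show z - A (F z) = z; rw [hFz]; simp
  by_contra hne
  have hzx : 0 < ‖z - x‖ := by
    rw [norm_pos_iff, sub_ne_zero]; exact hne
  have hzn : ‖z - y₀‖ < s₁ := by
    simpa [Metric.mem_ball, dist_eq_norm] using hzB
  have hxn : ‖x - y₀‖ ≤ s₀ := by
    simpa [Metric.mem_closedBall, dist_eq_norm] using hxball
  have hest : ‖z - x‖ ≤ β * K / 2 * (‖z - y₀‖ + ‖x - y₀‖) * ‖z - x‖ := by
    calc ‖z - x‖ = ‖G z - G x‖ := by rw [hGz, hGx]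
      _ ≤ _ := key z hzD x hxD
  have hlt : β * K / 2 * (‖z - y₀‖ + ‖x - y₀‖) * ‖z - x‖
      < β * K / 2 * (s₁ + s₀) * ‖z - x‖ := by
    refine mul_lt_mul_of_pos_right ?_ hzx
    exact mul_lt_mul_of_pos_left (by linarith) (by positivity)
  have heq1 : β * K / 2 * (s₁ + s₀) * ‖z - x‖ = ‖z - x‖ := by
    rw [show s₁ + s₀ = s₀ + s₁ from add_comm _ _, hsum, one_mul]
  linarith
end
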